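/- arXiv:math/0611751 — 4 statements merged into one kernel-verified Lean document; each statement's English description precedes it below -/
import Mathlib

section
/- Let ξ and ξ' be independent random vectors on a probability space (Ω, P), each distributed according to the standard Gaussian measure on the Euclidean space ℝⁿ, let C : ℝⁿ → ℝⁿ be linear with operator norm ‖C‖ ≤ 1, and set η = (Id − C C*)^{1/2} ξ' + C ξ. Then for every φ ∈ ℝⁿ, almost surely E[ exp(⟨φ, η⟩ − ½‖φ‖²) | σ(ξ) ] = exp(⟨C*φ, ξ⟩ − ½‖C*φ‖²), where σ(ξ) is the σ-algebra generated by ξ. -/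
open MeasureTheory ProbabilityTheory
open scoped RealInnerProductSpace NNReal ENNReal
open Real

/-- The standard Gaussian measure on the Euclidean space `ℝⁿ`:
the centered Gaussian measure with identity covariance, realized as the image of the
product of `n` standard Gaussian measures on `ℝ`. -/
noncomputable def stdGaussian (n : ℕ) : Measure (EuclideanSpace ℝ (Fin n)) :=
  (Measure.pi fun _ : Fin n => gaussianReal 0 1).map
    (MeasurableEquiv.toLp 2 (Fin n → ℝ))

namespace WickAux

lemma pdf_mul_exp (t x : ℝ) :
    gaussianPDFReal 0 1 x * rexp (t * x) = rexp (t ^ 2 / 2) * gaussianPDFReal t 1 x := by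
  simp only [gaussianPDFReal, NNReal.coe_one, mul_one, sub_zero]
  rw [mul_assoc, ← Real.exp_add, ← mul_assoc, mul_comm (rexp (t ^ 2 / 2)), mul_assoc,
    ← Real.exp_add]
  congr 1
  ring_nf

lemma gaussianReal_repr :
    gaussianReal 0 1
      = volume.withDensity fun x => ((gaussianPDFReal 0 1 x).toNNReal : ℝ≥0∞) := by
  rw [gaussianReal_of_var_ne_zero 0 one_ne_zero]
  rfl

lemma smul_eq (t : ℝ) :
    (fun x => (gaussianPDFReal 0 1 x).toNNReal • rexp (t * x))
      = fun x => rexp (t ^ 2 / 2) * gaussianPDFReal t 1 x := by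
  funext x
  rw [NNReal.smul_def, smul_eq_mul, Real.coe_toNNReal _ (gaussianPDFReal_nonneg 0 1 x), pdf_mul_exp]

lemma integrable_exp_mul (t : ℝ) :
    Integrable (fun x => rexp (t * x)) (gaussianReal 0 1) := by
  rw [gaussianReal_repr,
    integrable_withDensity_iff_integrable_smul (measurable_gaussianPDFReal 0 1).real_toNNReal]
  rw [smul_eq]
  exact (integrable_gaussianPDFReal t 1).const_mul _

lemma integral_exp_mul (t : ℝ) :
    ∫ x, rexp (t * x) ∂gaussianReal 0 1 = rexp (t ^ 2 / 2) := by
  rw [gaussianReal_repr,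
    integral_withDensity_eq_integral_smul (measurable_gaussianPDFReal 0 1).real_toNNReal]
  simp only [smul_eq]
  rw [integral_const_mul, integral_gaussianPDFReal_eq_one t one_ne_zero, mul_one]



lemma integrable_pi_prod {ι : Type*} [Fintype ι] (μ : Measure ℝ) [SigmaFinite μ]
    {f : ι → ℝ → ℝ} (hf : ∀ i, Integrable (f i) μ) :
    Integrable (fun x : ι → ℝ => ∏ i, f i (x i)) (Measure.pi fun _ => μ) := by
  letI : MeasureSpace ℝ := ⟨μ⟩
  haveI : SigmaFinite (volume : Measure ℝ) := ‹SigmaFinite μ›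
  exact Integrable.fintype_prod hf

lemma integral_pi_prod {ι : Type*} [Fintype ι] (μ : Measure ℝ) [SigmaFinite μ]
    (f : ι → ℝ → ℝ) :
    ∫ x : ι → ℝ, ∏ i, f i (x i) ∂(Measure.pi fun _ => μ) = ∏ i, ∫ x, f i x ∂μ := by
  letI : MeasureSpace ℝ := ⟨μ⟩
  haveI : SigmaFinite (volume : Measure ℝ) := ‹SigmaFinite μ›
  exact integral_fintype_prod_eq_prod f

variable {n : ℕ}

lemma comp_symm_eq (v : EuclideanSpace ℝ (Fin n)) :
    ((fun x : EuclideanSpace ℝ (Fin n) => rexp ⟪v, x⟫) ∘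
        (MeasurableEquiv.toLp 2 (Fin n → ℝ)))
      = fun y : Fin n → ℝ => ∏ i, rexp (v i * y i) := by
  funext y
  simp only [Function.comp_apply, PiLp.inner_apply, RCLike.inner_apply, conj_trivial]
  rw [← Real.exp_sum]
  exact congrArg rexp (Finset.sum_congr rfl fun i _ => mul_comm _ _)

lemma stdGaussian_integrable_exp_inner (v : EuclideanSpace ℝ (Fin n)) :
    Integrable (fun x => rexp ⟪v, x⟫) (stdGaussian n) := by
  rw [_root_.stdGaussian, integrable_map_equiv, comp_symm_eq]
  exact integrable_pi_prod _ fun i => integrable_exp_mul (v i)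

lemma stdGaussian_integral_exp_inner (v : EuclideanSpace ℝ (Fin n)) :
    ∫ x, rexp ⟪v, x⟫ ∂stdGaussian n = rexp (‖v‖ ^ 2 / 2) := by
  rw [_root_.stdGaussian, integral_map_equiv]
  have : (fun y : Fin n → ℝ =>
      rexp ⟪v, (MeasurableEquiv.toLp 2 (Fin n → ℝ)) y⟫)
        = fun y : Fin n → ℝ => ∏ i, rexp (v i * y i) := comp_symm_eq v
  rw [this, integral_pi_prod (gaussianReal 0 1) (fun i t => rexp (v i * t))]
  have hnorm : ‖v‖ ^ 2 = ∑ i, v i ^ 2 := by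
    rw [← real_inner_self_eq_norm_sq]
    simp only [PiLp.inner_apply, RCLike.inner_apply, conj_trivial, sq]
  simp_rw [integral_exp_mul]
  rw [← Real.exp_sum, hnorm, Finset.sum_div]

end WickAux

/-- If `ξ, ξ'` are independent standard Gaussian random vectors in `ℝⁿ`, `C` is a linear map
with `‖C‖ ≤ 1`, `R` is the positive semidefinite square root of `Id - C C*`, and
`η = R ξ' + C ξ`, then for every `φ ∈ ℝⁿ`, almost surely
`E[exp(⟪φ, η⟫ - ½‖φ‖²) | σ(ξ)] = exp(⟪C*φ, ξ⟫ - ½‖C*φ‖²)`. -/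
theorem condexp_wick_exponential_second_quantization
    {Ω : Type*} [MeasureSpace Ω] [IsProbabilityMeasure (ℙ : Measure Ω)] {n : ℕ}
    (ξ ξ' : Ω → EuclideanSpace ℝ (Fin n)) (hξ : Measurable ξ) (hξ' : Measurable ξ')
    (hindep : IndepFun ξ ξ' ℙ)
    (hlaw : Measure.map ξ ℙ = stdGaussian n) (hlaw' : Measure.map ξ' ℙ = stdGaussian n)
    (C R : EuclideanSpace ℝ (Fin n) →L[ℝ] EuclideanSpace ℝ (Fin n))
    (hC : ‖C‖ ≤ 1)
    (hR_selfAdjoint : ContinuousLinearMap.adjoint R = R)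
    (hR_pos : ∀ x, 0 ≤ ⟪R x, x⟫)
    (hR_sq : R ∘L R = ContinuousLinearMap.id ℝ _ - C ∘L ContinuousLinearMap.adjoint C)
    (η : Ω → EuclideanSpace ℝ (Fin n)) (hη : ∀ ω, η ω = R (ξ' ω) + C (ξ ω))
    (φ : EuclideanSpace ℝ (Fin n)) :
    ℙ[fun ω => Real.exp (⟪φ, η ω⟫ - ‖φ‖ ^ 2 / 2) | MeasurableSpace.comap ξ inferInstance]
      =ᵐ[ℙ] fun ω => Real.exp (⟪ContinuousLinearMap.adjoint C φ, ξ ω⟫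
        - ‖ContinuousLinearMap.adjoint C φ‖ ^ 2 / 2) := by
  classical
  set K : EuclideanSpace ℝ (Fin n) →L[ℝ] EuclideanSpace ℝ (Fin n) :=
    ContinuousLinearMap.adjoint C with hK
  have hm : MeasurableSpace.comap ξ inferInstance ≤ (inferInstance : MeasurableSpace Ω) :=
    hξ.comap_le
  set c : ℝ := ‖φ‖ ^ 2 / 2 - ‖K φ‖ ^ 2 / 2 with hc
  -- the two factors
  set F : EuclideanSpace ℝ (Fin n) → ℝ := fun x => Real.exp (⟪K φ, x⟫ - ‖K φ‖ ^ 2 / 2) with hF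
  set G : EuclideanSpace ℝ (Fin n) → ℝ := fun x => Real.exp (⟪R φ, x⟫ - c) with hG
  have hF_cont : Continuous F := by
    apply Real.continuous_exp.comp
    exact (continuous_const.inner continuous_id).sub continuous_const
  have hG_cont : Continuous G := by
    apply Real.continuous_exp.comp
    exact (continuous_const.inner continuous_id).sub continuous_const
  set f : Ω → ℝ := fun ω => F (ξ ω) with hf
  set g : Ω → ℝ := fun ω => G (ξ' ω) with hg
  -- norm identity
  have hnorm : ‖R φ‖ ^ 2 = ‖φ‖ ^ 2 - ‖K φ‖ ^ 2 := by
    have h1 : ⟪R φ, R φ⟫ = ⟪φ, R (R φ)⟫ := by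
      calc ⟪R φ, R φ⟫ = ⟪(ContinuousLinearMap.adjoint R) φ, R φ⟫ := by rw [hR_selfAdjoint]
        _ = ⟪φ, R (R φ)⟫ := ContinuousLinearMap.adjoint_inner_left R (R φ) φ
    have h2 : R (R φ) = φ - C (K φ) := by
      have := congrArg (fun T => T φ) hR_sq
      simpa using this
    have h3 : ⟪K φ, K φ⟫ = ⟪φ, C (K φ)⟫ :=
      ContinuousLinearMap.adjoint_inner_left C (K φ) φ
    rw [← real_inner_self_eq_norm_sq, h1, h2, inner_sub_right, ← h3,
      real_inner_self_eq_norm_sq, real_inner_self_eq_norm_sq]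
  -- the integrand splits
  have hsplit : (fun ω => Real.exp (⟪φ, η ω⟫ - ‖φ‖ ^ 2 / 2)) = f * g := by
    funext ω
    have hA : ⟪φ, R (ξ' ω)⟫ = ⟪R φ, ξ' ω⟫ := by
      conv_rhs => rw [← hR_selfAdjoint]
      rw [ContinuousLinearMap.adjoint_inner_left]
    have hB : ⟪φ, C (ξ ω)⟫ = ⟪K φ, ξ ω⟫ :=
      (ContinuousLinearMap.adjoint_inner_left C (ξ ω) φ).symm
    simp only [Pi.mul_apply, hf, hg, hF, hG, ← Real.exp_add, hη ω, inner_add_right, hA, hB]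
    congr 1
    rw [hc]
    ring
  -- integrability
  have hFeq : F = fun x => Real.exp ⟪K φ, x⟫ * Real.exp (-(‖K φ‖ ^ 2 / 2)) := by
    funext x
    simp only [hF]
    rw [sub_eq_add_neg, Real.exp_add]
  have hGeq : G = fun x => Real.exp ⟪R φ, x⟫ * Real.exp (-c) := by
    funext x
    simp only [hG]
    rw [sub_eq_add_neg, Real.exp_add]
  have hF_int : Integrable F (stdGaussian n) := by
    rw [hFeq]
    exact (WickAux.stdGaussian_integrable_exp_inner (K φ)).mul_const _
  have hG_int : Integrable G (stdGaussian n) := by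
    rw [hGeq]
    exact (WickAux.stdGaussian_integrable_exp_inner (R φ)).mul_const _
  have hf_int : Integrable f ℙ := by
    rw [hf]
    exact ((integrable_map_measure hF_cont.aestronglyMeasurable hξ.aemeasurable).1
      (by rw [hlaw]; exact hF_int))
  have hg_int : Integrable g ℙ := by
    rw [hg]
    exact ((integrable_map_measure hG_cont.aestronglyMeasurable hξ'.aemeasurable).1
      (by rw [hlaw']; exact hG_int))
  have hfg_indep : IndepFun f g ℙ := hindep.comp hF_cont.measurable hG_cont.measurable
  have hfg_int : Integrable (f * g) ℙ := hfg_indep.integrable_mul hf_int hg_int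
  -- f is measurable wrt comap ξ
  have hξ_meas : Measurable[MeasurableSpace.comap ξ inferInstance] ξ :=
    fun s hs => ⟨s, hs, rfl⟩
  have hf_sm : StronglyMeasurable[MeasurableSpace.comap ξ inferInstance] f :=
    hF_cont.stronglyMeasurable.comp_measurable hξ_meas
  have hg_sm : StronglyMeasurable[MeasurableSpace.comap ξ' inferInstance] g :=
    hG_cont.stronglyMeasurable.comp_measurable (fun s hs => ⟨s, hs, rfl⟩)
  -- expectation of g
  have hEg : ∫ ω, g ω ∂ℙ = 1 := by
    rw [hg, ← integral_map hξ'.aemeasurable hG_cont.aestronglyMeasurable, hlaw', hGeq,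
      integral_mul_const, WickAux.stdGaussian_integral_exp_inner, ← Real.exp_add, hnorm, hc]
    have : (‖φ‖ ^ 2 - ‖K φ‖ ^ 2) / 2 + -(‖φ‖ ^ 2 / 2 - ‖K φ‖ ^ 2 / 2) = 0 := by ring
    rw [this, Real.exp_zero]
  -- conditional expectation computation
  have h1 : ℙ[f * g | MeasurableSpace.comap ξ inferInstance]
      =ᵐ[ℙ] f * ℙ[g | MeasurableSpace.comap ξ inferInstance] :=
    condExp_mul_of_stronglyMeasurable_left hf_sm hfg_int hg_int
  have h2 : ℙ[g | MeasurableSpace.comap ξ inferInstance] =ᵐ[ℙ] fun _ => ∫ ω, g ω ∂ℙ :=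
    condExp_indep_eq hξ'.comap_le hm hg_sm hindep.symm
  rw [hsplit]
  refine h1.trans ?_
  have h3 : f * (ℙ[g | MeasurableSpace.comap ξ inferInstance] : Ω → ℝ) =ᵐ[ℙ] f := by
    filter_upwards [h2] with ω hω
    simp only [Pi.mul_apply, hω, hEg, mul_one]
  exact h3.trans (by rw [hf])
end

section
/- Let (Ω, F, P) be a probability space, E₁ and E₂ standard Borel spaces, and W₁, X₁ : Ω → E₁, W₂, X₂ : Ω → E₂ measurable maps. Suppose the joint law of (X₁, X₂) is absolutely continuous with respect to the joint law of (W₁, W₂), with density p : E₁ × E₂ → [0, ∞) (measurable). Let ν(u, ·) denote (a version of) the conditional distribution of W₁ given W₂ = u, i.e. the disintegration of law(W₁, W₂) with respect to law(W₂). Then for law(X₂)-almost every u the denominator ∫_{E₁} p(v, u) ν(u, dv) is strictly positive, and for every bounded measurable φ : E₁ → ℝ, the function ψ(u) := (∫_{E₁} φ(v) p(v, u) ν(u, dv)) / (∫_{E₁} p(v, u) ν(u, dv)) satisfies: ψ(X₂) is a version of the conditional expectation E[ φ(X₁) | σ(X₂) ], i.e. ψ ∘ X₂ = E[ φ ∘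 X₁ | σ(X₂) ] P-almost surely. -/
open MeasureTheory ProbabilityTheory
open scoped ENNReal NNReal

/-- Bayes formula for smoothing: if `law(X₁, X₂) ≪ law(W₁, W₂)` with density `p`, and `ν` is
the conditional distribution of `W₁` given `W₂`, then the denominator
`∫ p(v, u) ν(u, dv)` is a.e. positive and
`ψ(u) = (∫ φ(v) p(v,u) ν(u,dv)) / (∫ p(v,u) ν(u,dv))` composed with `X₂` is a version of
`E[φ(X₁) | σ(X₂)]`. -/
theorem bayes_formula_for_conditional_expectation
    {Ω E₁ E₂ : Type*} [MeasurableSpace Ω]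
    [MeasurableSpace E₁] [StandardBorelSpace E₁]
    [MeasurableSpace E₂] [StandardBorelSpace E₂]
    (P : Measure Ω) [IsProbabilityMeasure P]
    (W₁ X₁ : Ω → E₁) (W₂ X₂ : Ω → E₂)
    (hW₁ : Measurable W₁) (hX₁ : Measurable X₁)
    (hW₂ : Measurable W₂) (hX₂ : Measurable X₂)
    (p : E₁ → E₂ → ℝ) (hp : Measurable (Function.uncurry p)) (hp0 : ∀ v u, 0 ≤ p v u)
    (habs : Measure.map (fun ω => (X₁ ω, X₂ ω)) P
      = (Measure.map (fun ω => (W₁ ω, W₂ ω)) P).withDensity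
          (fun x => ENNReal.ofReal (p x.1 x.2)))
    (ν : Kernel E₂ E₁) [IsMarkovKernel ν]
    (hν : ∀ A : Set E₁, MeasurableSet A → ∀ B : Set E₂, MeasurableSet B →
      Measure.map (fun ω => (W₁ ω, W₂ ω)) P (A ×ˢ B)
        = ∫⁻ u in B, ν u A ∂(Measure.map W₂ P)) :
    (∀ᵐ u ∂(Measure.map X₂ P), 0 < ∫⁻ v, ENNReal.ofReal (p v u) ∂(ν u)) ∧
    (∀ φ : E₁ → ℝ, Measurable φ → (∃ M : ℝ, ∀ v, |φ v| ≤ M) →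
      (fun ω => (∫ v, φ v * p v (X₂ ω) ∂(ν (X₂ ω))) / (∫ v, p v (X₂ ω) ∂(ν (X₂ ω))))
        =ᵐ[P] P[fun ω => φ (X₁ ω) | MeasurableSpace.comap X₂ inferInstance]) := by
  classical
  set m : Measure E₂ := Measure.map W₂ P with hm_def
  haveI : IsProbabilityMeasure m := Measure.isProbabilityMeasure_map hW₂.aemeasurable
  haveI : IsProbabilityMeasure (Measure.map (fun ω => (W₁ ω, W₂ ω)) P) :=
    Measure.isProbabilityMeasure_map (hW₁.prodMk hW₂).aemeasurable
  haveI : IsProbabilityMeasure (Measure.map (fun ω => (X₁ ω, X₂ ω)) P) :=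
    Measure.isProbabilityMeasure_map (hX₁.prodMk hX₂).aemeasurable
  haveI : IsProbabilityMeasure (Measure.map X₂ P) := Measure.isProbabilityMeasure_map hX₂.aemeasurable
  -- the joint law of (W₁, W₂) is the swap of m ⊗ₘ ν
  have hμeq : Measure.map (fun ω => (W₁ ω, W₂ ω)) P = Measure.map Prod.swap (m ⊗ₘ ν) := by
    haveI : IsProbabilityMeasure (Measure.map (Prod.swap : E₂ × E₁ → E₁ × E₂) (m ⊗ₘ ν)) := by
      constructor
      rw [Measure.map_apply measurable_swap MeasurableSet.univ]
      simp
    refine MeasureTheory.ext_of_generate_finite _ generateFrom_prod.symm isPiSystem_prod ?_ (by simp)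
    rintro s ⟨A, hA, B, hB, rfl⟩
    rw [hν A hA B hB, Measure.map_apply measurable_swap (hA.prod hB)]
    rw [Set.preimage_swap_prod, Measure.compProd_apply_prod hB hA]
  -- the density of law(X₂) w.r.t. m
  set D : E₂ → ℝ≥0∞ := fun u => ∫⁻ v, ENNReal.ofReal (p v u) ∂(ν u) with hD_def
  have hpm' : Measurable fun x : E₂ × E₁ => ENNReal.ofReal (p x.2 x.1) :=
    ENNReal.measurable_ofReal.comp (hp.comp measurable_swap)
  have hD_meas : Measurable D := by
    refine Measurable.lintegral_kernel_prod_right ?_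
    exact hpm'
  have hmap2 : Measure.map X₂ P = Measure.map Prod.snd (Measure.map (fun ω => (X₁ ω, X₂ ω)) P) := by
    rw [Measure.map_map measurable_snd (hX₁.prodMk hX₂)]
    rfl
  have hm' : Measure.map X₂ P = m.withDensity D := by
    refine Measure.ext fun B hB => ?_
    have hpm2 : Measurable fun x : E₁ × E₂ => ENNReal.ofReal (p x.1 x.2) :=
      ENNReal.measurable_ofReal.comp hp
    rw [hmap2, habs, Measure.map_apply measurable_snd hB,
      withDensity_apply _ (measurable_snd hB), withDensity_apply _ hB, hμeq,
      setLIntegral_map (measurable_snd hB) hpm2 measurable_swap]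
    have hpre : (Prod.swap : E₂ × E₁ → E₁ × E₂) ⁻¹' (Prod.snd ⁻¹' B) = B ×ˢ Set.univ := by
      ext z; simp
    rw [hpre]
    simp only [Prod.fst_swap, Prod.snd_swap]
    rw [Measure.setLIntegral_compProd hpm' hB MeasurableSet.univ]
    simp [hD_def]
  have hD_int : ∫⁻ u, D u ∂m = 1 := by
    have h1 : (Measure.map X₂ P) Set.univ = 1 := measure_univ
    rw [hm', withDensity_apply _ MeasurableSet.univ, Measure.restrict_univ] at h1
    exact h1
  have hD_lt_top : ∀ᵐ u ∂m, D u < ⊤ :=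
    ae_lt_top hD_meas (by rw [hD_int]; exact ENNReal.one_ne_top)
  -- Part 1 : a.e. positivity
  have hpos : ∀ᵐ u ∂(Measure.map X₂ P), 0 < D u := by
    rw [hm', ae_iff]
    have hset : {u | ¬ 0 < D u} = {u | D u = 0} := by
      ext u; simp [pos_iff_ne_zero]
    have hNmeas : MeasurableSet {u : E₂ | D u = 0} := hD_meas (measurableSet_singleton 0)
    rw [hset, withDensity_apply _ hNmeas]
    calc ∫⁻ u in {u | D u = 0}, D u ∂m = ∫⁻ _ in {u | D u = 0}, 0 ∂m :=
          setLIntegral_congr_fun hNmeas (fun u hu => hu)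
      _ = 0 := by simp
  refine ⟨hpos, ?_⟩
  -- Part 2
  intro φ hφ hbdd
  obtain ⟨M, hM⟩ := hbdd
  haveI : Nonempty Ω := Measure.nonempty_of_neZero P
  have hM0 : 0 ≤ M := le_trans (abs_nonneg _) (hM (X₁ (Classical.arbitrary Ω)))
  set num : E₂ → ℝ := fun u => ∫ v, φ v * p v u ∂(ν u) with hnum_def
  set den : E₂ → ℝ := fun u => ∫ v, p v u ∂(ν u) with hden_def
  have hnum_sm : StronglyMeasurable num :=
    StronglyMeasurable.integral_kernel_prod_right
      (f := fun u v => φ v * p v u)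
      (((hφ.comp measurable_snd).mul (hp.comp measurable_swap)).stronglyMeasurable)
  have hden_sm : StronglyMeasurable den :=
    StronglyMeasurable.integral_kernel_prod_right
      (f := fun u v => p v u) ((hp.comp measurable_swap).stronglyMeasurable)
  have hψ_meas : Measurable fun u => num u / den u :=
    hnum_sm.measurable.div hden_sm.measurable
  -- a uniform bound for ψ
  have hψ_bound : ∀ u, |num u / den u| ≤ M := by
    intro u
    have hpm : Measurable fun v => p v u :=
      hp.comp (measurable_id.prodMk measurable_const)
    by_cases hint : Integrable (fun v => p v u) (ν u)
    · have hden0 : 0 ≤ den u := integral_nonneg fun v => hp0 v u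
      rcases eq_or_lt_of_le hden0 with h0 | hlt
      · rw [← h0, div_zero, abs_zero]; exact hM0
      · have hφp_int : Integrable (fun v => φ v * p v u) (ν u) := by
          refine Integrable.mono' (hint.const_mul M)
            ((hφ.mul hpm).aestronglyMeasurable) (Filter.Eventually.of_forall fun v => ?_)
          rw [Real.norm_eq_abs, abs_mul, abs_of_nonneg (hp0 v u)]
          exact mul_le_mul_of_nonneg_right (hM v) (hp0 v u)
        rw [abs_div, abs_of_pos hlt, div_le_iff₀ hlt]
        calc |num u| ≤ ∫ v, |φ v * p v u| ∂(ν u) := by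
              simp only [hnum_def, ← Real.norm_eq_abs]
              exact norm_integral_le_integral_norm _
          _ ≤ ∫ v, M * p v u ∂(ν u) := by
              refine integral_mono hφp_int.abs (hint.const_mul M) fun v => ?_
              rw [abs_mul, abs_of_nonneg (hp0 v u)]
              exact mul_le_mul_of_nonneg_right (hM v) (hp0 v u)
          _ = M * den u := integral_const_mul M _
    · have h0 : den u = 0 := integral_undef hint
      rw [h0, div_zero, abs_zero]; exact hM0
  -- integrability of ψ ∘ X₂ and φ ∘ X₁
  have hg_int : Integrable (fun ω => num (X₂ ω) / den (X₂ ω)) P := by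
    refine Integrable.mono' (integrable_const M)
      ((hψ_meas.comp hX₂).aestronglyMeasurable) (Filter.Eventually.of_forall fun ω => ?_)
    rw [Real.norm_eq_abs]; exact hψ_bound (X₂ ω)
  have hf_int : Integrable (fun ω => φ (X₁ ω)) P := by
    refine Integrable.mono' (integrable_const M)
      ((hφ.comp hX₁).aestronglyMeasurable) (Filter.Eventually.of_forall fun ω => ?_)
    rw [Real.norm_eq_abs]; exact hM (X₁ ω)
  have hm_le : MeasurableSpace.comap X₂ inferInstance ≤ (inferInstance : MeasurableSpace Ω) :=
    hX₂.comap_le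
  -- key integrand identity a.e.
  have hkey : ∀ᵐ u ∂m, (D u).toNNReal • (num u / den u) = num u := by
    filter_upwards [hD_lt_top] with u hu
    have hpm : Measurable fun v => p v u :=
      hp.comp (measurable_id.prodMk measurable_const)
    by_cases hD0 : D u = 0
    · have hmeasv : Measurable fun v => ENNReal.ofReal (p v u) :=
        ENNReal.measurable_ofReal.comp hpm
      have hp_ae : (fun v => ENNReal.ofReal (p v u)) =ᵐ[ν u] 0 :=
        (lintegral_eq_zero_iff hmeasv).mp hD0
      have hnum0 : num u = 0 := by
        rw [hnum_def]
        refine integral_eq_zero_of_ae ?_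
        filter_upwards [hp_ae] with v hv
        have hv' : ENNReal.ofReal (p v u) = 0 := hv
        have : p v u = 0 := le_antisymm (by simpa [ENNReal.ofReal_eq_zero] using hv') (hp0 v u)
        simp [this]
      simp [hnum0]
    · have hint : Integrable (fun v => p v u) (ν u) := by
        refine ⟨hpm.aestronglyMeasurable, ?_⟩
        rw [hasFiniteIntegral_iff_ofReal (Filter.Eventually.of_forall fun v => hp0 v u)]
        exact hu
      have hden_eq : den u = (D u).toReal := by
        simp only [hden_def, hD_def]
        rw [integral_eq_lintegral_of_nonneg_ae (Filter.Eventually.of_forall fun v => hp0 v u)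
          hpm.aestronglyMeasurable]
      have hden_ne : den u ≠ 0 := by
        rw [hden_eq]
        exact ENNReal.toReal_ne_zero.mpr ⟨hD0, hu.ne⟩
      have hcoeR : ((D u).toNNReal : ℝ) = den u := by rw [hden_eq]; rfl
      rw [NNReal.smul_def, smul_eq_mul, hcoeR, mul_comm, div_mul_cancel₀ _ hden_ne]
  -- total integrability of p over m ⊗ₘ ν
  have hlint_p : ∫⁻ z, ENNReal.ofReal (p z.2 z.1) ∂(m ⊗ₘ ν) = 1 := by
    have hpm2 : Measurable fun x : E₁ × E₂ => ENNReal.ofReal (p x.1 x.2) :=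
      ENNReal.measurable_ofReal.comp hp
    have : ∫⁻ z, ENNReal.ofReal (p z.2 z.1) ∂(m ⊗ₘ ν)
        = ∫⁻ x, ENNReal.ofReal (p x.1 x.2) ∂(Measure.map Prod.swap (m ⊗ₘ ν)) := by
      rw [lintegral_map hpm2 measurable_swap]
      rfl
    rw [this, ← hμeq]
    have h1 : (Measure.map (fun ω => (X₁ ω, X₂ ω)) P) Set.univ = 1 := measure_univ
    rw [habs, withDensity_apply _ MeasurableSet.univ, Measure.restrict_univ] at h1
    exact h1
  have hp_int : Integrable (fun z : E₂ × E₁ => p z.2 z.1) (m ⊗ₘ ν) := by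
    refine ⟨(hp.comp measurable_swap).aestronglyMeasurable, ?_⟩
    have hnn : 0 ≤ᵐ[(m ⊗ₘ ν : Measure (E₂ × E₁))] fun z : E₂ × E₁ => p z.2 z.1 :=
      Filter.Eventually.of_forall fun z => hp0 z.2 z.1
    rw [hasFiniteIntegral_iff_ofReal hnn, hlint_p]
    exact ENNReal.one_lt_top
  have hφp_int : Integrable (fun z : E₂ × E₁ => p z.2 z.1 * φ z.2) (m ⊗ₘ ν) := by
    refine Integrable.mono' (hp_int.mul_const M)
      (((hp.comp measurable_swap).mul (hφ.comp measurable_snd)).aestronglyMeasurable)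
      (Filter.Eventually.of_forall fun z => ?_)
    rw [Real.norm_eq_abs, abs_mul, abs_of_nonneg (hp0 z.2 z.1)]
    exact mul_le_mul_of_nonneg_left (hM z.2) (hp0 z.2 z.1)
  -- conclude via uniqueness of conditional expectation
  have hDae : (fun u => ((D u).toNNReal : ℝ≥0∞)) =ᵐ[m] D := by
    filter_upwards [hD_lt_top] with u hu using ENNReal.coe_toNNReal hu.ne
  have hD'_meas : Measurable fun u => (D u).toNNReal :=
    ENNReal.measurable_toNNReal.comp hD_meas
  have hmain : (fun ω => num (X₂ ω) / den (X₂ ω))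
      =ᵐ[P] P[fun ω => φ (X₁ ω) | MeasurableSpace.comap X₂ inferInstance] := by
    refine ae_eq_condExp_of_forall_setIntegral_eq hm_le hf_int
      (fun s _ _ => hg_int.integrableOn) (fun s hs _ => ?_) ?_
    · obtain ⟨B, hB, rfl⟩ := hs
      have hL : ∫ ω in X₂ ⁻¹' B, num (X₂ ω) / den (X₂ ω) ∂P = ∫ u in B, num u ∂m := by
        rw [← setIntegral_map hB (hψ_meas.aestronglyMeasurable) hX₂.aemeasurable, hm',
          ← withDensity_congr_ae hDae,
          setIntegral_withDensity_eq_setIntegral_smul₀ hD'_meas.aemeasurable _ hB]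
        refine setIntegral_congr_ae hB ?_
        filter_upwards [hkey] with u hu _ using hu
      have hR : ∫ ω in X₂ ⁻¹' B, φ (X₁ ω) ∂P = ∫ u in B, num u ∂m := by
        have h1 : ∫ ω in X₂ ⁻¹' B, φ (X₁ ω) ∂P
            = ∫ x in Prod.snd ⁻¹' B, φ x.1 ∂(Measure.map (fun ω => (X₁ ω, X₂ ω)) P) := by
          have hφ1 : AEStronglyMeasurable (fun x : E₁ × E₂ => φ x.1)
              (Measure.map (fun ω => (X₁ ω, X₂ ω)) P) :=
            (hφ.comp measurable_fst).aestronglyMeasurable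
          rw [setIntegral_map (measurable_snd hB) hφ1 (hX₁.prodMk hX₂).aemeasurable]
          rfl
        have hcoe : (fun x : E₁ × E₂ => ENNReal.ofReal (p x.1 x.2))
            = fun x : E₁ × E₂ => (((p x.1 x.2).toNNReal : ℝ≥0) : ℝ≥0∞) := rfl
        have hpNN : Measurable fun x : E₁ × E₂ => (p x.1 x.2).toNNReal :=
          measurable_real_toNNReal.comp hp
        rw [h1, habs, hcoe,
          setIntegral_withDensity_eq_setIntegral_smul hpNN _ (measurable_snd hB)]
        have h2 : ∫ x in Prod.snd ⁻¹' B, (p x.1 x.2).toNNReal • φ x.1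
              ∂(Measure.map (fun ω => (W₁ ω, W₂ ω)) P)
            = ∫ x in Prod.snd ⁻¹' B, p x.1 x.2 * φ x.1
              ∂(Measure.map (fun ω => (W₁ ω, W₂ ω)) P) := by
          refine setIntegral_congr_ae (measurable_snd hB) (Filter.Eventually.of_forall ?_)
          intro x _
          rw [NNReal.smul_def, Real.coe_toNNReal _ (hp0 x.1 x.2)]
          simp [smul_eq_mul]
        have hpφ1 : AEStronglyMeasurable (fun x : E₁ × E₂ => p x.1 x.2 * φ x.1)
            (Measure.map (Prod.swap : E₂ × E₁ → E₁ × E₂) (m ⊗ₘ ν)) :=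
          ((hp.mul (hφ.comp measurable_fst))).aestronglyMeasurable
        rw [h2, hμeq, setIntegral_map (measurable_snd hB) hpφ1 measurable_swap.aemeasurable]
        have hpre : (Prod.swap : E₂ × E₁ → E₁ × E₂) ⁻¹' (Prod.snd ⁻¹' B) = B ×ˢ Set.univ := by
          ext z; simp
        rw [hpre]
        have h3 : ∫ z in B ×ˢ Set.univ, p (Prod.swap z).1 (Prod.swap z).2 * φ (Prod.swap z).1
              ∂(m ⊗ₘ ν)
            = ∫ z in B ×ˢ Set.univ, p z.2 z.1 * φ z.2 ∂(m ⊗ₘ ν) := rfl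
        rw [h3, Measure.setIntegral_compProd hB MeasurableSet.univ hφp_int.integrableOn]
        simp only [Measure.restrict_univ]
        refine setIntegral_congr_ae hB (Filter.Eventually.of_forall fun u _ => ?_)
        simp only [hnum_def]
        refine integral_congr_ae (Filter.Eventually.of_forall fun v => ?_)
        ring
      rw [hL, hR]
    · have hX₂' : Measurable[MeasurableSpace.comap X₂ inferInstance] X₂ :=
        Measurable.of_comap_le le_rfl
      exact StronglyMeasurable.aestronglyMeasurable
        ((hψ_meas.comp hX₂').stronglyMeasurable)
  exact hmain
end

section
/- Let H = L²([0,1], ℝ²) and for t ∈ [0,1] let P_t : H → H be the orthogonal projection (P_t φ)(s) = 1_{[0,t]}(s) φ(s). Let S, T : H → H be bounded linear operators and c ≥ 0 a constant such that: (a) P_t S = P_t S P_t for every t ∈ [0,1]; and (b) ‖P_t (T φ)‖² ≤ c ∫₀ᵗ ‖P_s φ‖² ds for every φ ∈ H and t ∈ [0,1]. Then for every n ≥ 1 and every φ ∈ H: ‖(S ∘ T)ⁿ φ‖² ≤ (‖S‖² c)ⁿ / n! · ‖φ‖². -/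
open MeasureTheory

private theorem volterra_aux_calc (a b t f : ℝ) (n : ℕ) (hf : f ≠ 0) :
    a * (a ^ n / f * b * ((t ^ (n + 1) - 0 ^ (n + 1)) / ((n : ℝ) + 1)))
      = a ^ (n + 1) * t ^ (n + 1) / (((n : ℝ) + 1) * f) * b := by
  have hn1 : ((n : ℝ) + 1) ≠ 0 := by positivity
  rw [zero_pow n.succ_ne_zero, sub_zero, pow_succ]
  field_simp
  ring


/-- Let `H = L²([0,1], ℝ²)`, let `P t` be the orthogonal projection given by multiplication
with `1_{[0,t]}`, and let `S, T` be bounded operators such that `P_t S = P_t S P_t` and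
`‖P_t (T φ)‖² ≤ c ∫₀ᵗ ‖P_s φ‖² ds`.  Then `‖(S ∘ T)ⁿ φ‖² ≤ (‖S‖² c)ⁿ / n! ‖φ‖²`. -/
theorem volterra_iterate_norm_bound
    (P : ℝ → (Lp (EuclideanSpace ℝ (Fin 2)) 2 (volume.restrict (Set.Icc (0:ℝ) 1)) →L[ℝ]
        Lp (EuclideanSpace ℝ (Fin 2)) 2 (volume.restrict (Set.Icc (0:ℝ) 1))))
    (hP : ∀ (t : ℝ) (φ : Lp (EuclideanSpace ℝ (Fin 2)) 2 (volume.restrict (Set.Icc (0:ℝ) 1))),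
      (P t φ : ℝ → EuclideanSpace ℝ (Fin 2))
        =ᵐ[volume.restrict (Set.Icc (0:ℝ) 1)] (Set.Icc (0:ℝ) t).indicator φ)
    (S T : Lp (EuclideanSpace ℝ (Fin 2)) 2 (volume.restrict (Set.Icc (0:ℝ) 1)) →L[ℝ]
        Lp (EuclideanSpace ℝ (Fin 2)) 2 (volume.restrict (Set.Icc (0:ℝ) 1)))
    (c : ℝ) (hc : 0 ≤ c)
    (ha : ∀ t ∈ Set.Icc (0:ℝ) 1, (P t) ∘L S = ((P t) ∘L S) ∘L (P t))
    (hb : ∀ (φ : Lp (EuclideanSpace ℝ (Fin 2)) 2 (volume.restrict (Set.Icc (0:ℝ) 1))),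
      ∀ t ∈ Set.Icc (0:ℝ) 1, ‖P t (T φ)‖ ^ 2 ≤ c * ∫ s in (0:ℝ)..t, ‖P s φ‖ ^ 2) :
    ∀ n : ℕ, 1 ≤ n →
      ∀ φ : Lp (EuclideanSpace ℝ (Fin 2)) 2 (volume.restrict (Set.Icc (0:ℝ) 1)),
        ‖((S ∘L T) ^ n) φ‖ ^ 2 ≤ (‖S‖ ^ 2 * c) ^ n / (n.factorial : ℝ) * ‖φ‖ ^ 2 := by
  -- contraction property of P
  have contr : ∀ (t : ℝ) χ, ‖P t χ‖ ≤ ‖χ‖ := by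
    intro t χ
    rw [Lp.norm_def, Lp.norm_def, eLpNorm_congr_ae (hP t χ)]
    exact ENNReal.toReal_mono (Lp.eLpNorm_ne_top χ) (eLpNorm_indicator_le _)
  -- monotonicity in t
  have mono : ∀ χ, Monotone (fun s : ℝ => ‖P s χ‖ ^ 2) := by
    intro χ s s' hss'
    have h1 : ‖P s χ‖ = ‖P s (P s' χ)‖ := by
      have h2 : ((Set.Icc (0:ℝ) s).indicator (P s' χ) : ℝ → EuclideanSpace ℝ (Fin 2))
          =ᵐ[volume.restrict (Set.Icc (0:ℝ) 1)] (Set.Icc (0:ℝ) s).indicator χ := by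
        filter_upwards [hP s' χ] with x hx
        by_cases h : x ∈ Set.Icc (0:ℝ) s
        · have hx' : x ∈ Set.Icc (0:ℝ) s' := ⟨h.1, h.2.trans hss'⟩
          rw [Set.indicator_of_mem h, Set.indicator_of_mem h, hx,
            Set.indicator_of_mem hx']
        · rw [Set.indicator_of_notMem h, Set.indicator_of_notMem h]
      rw [Lp.norm_def, Lp.norm_def, eLpNorm_congr_ae (hP s χ),
        eLpNorm_congr_ae ((hP s (P s' χ)).trans h2)]
    have := (h1.le.trans (contr s (P s' χ)))
    exact pow_le_pow_left₀ (norm_nonneg _) this 2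
  -- the basic iteration step
  have step : ∀ ψ, ∀ t ∈ Set.Icc (0:ℝ) 1,
      ‖P t ((S ∘L T) ψ)‖ ^ 2 ≤ ‖S‖ ^ 2 * c * ∫ s in (0:ℝ)..t, ‖P s ψ‖ ^ 2 := by
    intro ψ t ht
    have h0 : P t ((S ∘L T) ψ) = P t (S (P t (T ψ))) := by
      have := congrArg (fun A : Lp (EuclideanSpace ℝ (Fin 2)) 2 (volume.restrict (Set.Icc (0:ℝ) 1)) →L[ℝ]
          Lp (EuclideanSpace ℝ (Fin 2)) 2 (volume.restrict (Set.Icc (0:ℝ) 1)) => A (T ψ)) (ha t ht)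
      simpa only [one_pow, mul_one, ContinuousLinearMap.comp_apply] using this
    calc ‖P t ((S ∘L T) ψ)‖ ^ 2 = ‖P t (S (P t (T ψ)))‖ ^ 2 := by rw [h0]
      _ ≤ (‖S‖ * ‖P t (T ψ)‖) ^ 2 := by
          exact pow_le_pow_left₀ (norm_nonneg _) ((contr t _).trans (S.le_opNorm _)) 2
      _ = ‖S‖ ^ 2 * ‖P t (T ψ)‖ ^ 2 := by ring
      _ ≤ ‖S‖ ^ 2 * (c * ∫ s in (0:ℝ)..t, ‖P s ψ‖ ^ 2) :=
          mul_le_mul_of_nonneg_left (hb ψ t ht) (by positivity)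
      _ = ‖S‖ ^ 2 * c * ∫ s in (0:ℝ)..t, ‖P s ψ‖ ^ 2 := by ring
  intro n hn φ
  -- key induction
  have key : ∀ n : ℕ, 1 ≤ n → ∀ t ∈ Set.Icc (0:ℝ) 1,
      ‖P t (((S ∘L T) ^ n) φ)‖ ^ 2
        ≤ (‖S‖ ^ 2 * c) ^ n * t ^ n / (n.factorial : ℝ) * ‖φ‖ ^ 2 := by
    intro n hn
    induction n, hn using Nat.le_induction with
    | base =>
        intro t ht
        have h1 : ∫ s in (0:ℝ)..t, ‖P s φ‖ ^ 2 ≤ ∫ s in (0:ℝ)..t, ‖φ‖ ^ 2 := by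
          apply intervalIntegral.integral_mono_on ht.1
          · exact (mono φ).intervalIntegrable
          · exact intervalIntegrable_const
          · intro s _
            exact pow_le_pow_left₀ (norm_nonneg _) (contr s φ) 2
        have h2 := (step φ t ht).trans (mul_le_mul_of_nonneg_left h1 (by positivity))
        simp only [pow_one] at h2 ⊢
        rw [intervalIntegral.integral_const, smul_eq_mul] at h2
        simp only [Nat.factorial_one, Nat.cast_one, div_one]
        calc ‖P t ((S ∘L T) φ)‖ ^ 2 ≤ ‖S‖ ^ 2 * c * ((t - 0) * ‖φ‖ ^ 2) := h2
          _ = ‖S‖ ^ 2 * c * t * ‖φ‖ ^ 2 := by ring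
    | succ n hn IH =>
        intro t ht
        have h0 : ((S ∘L T) ^ (n + 1)) φ = (S ∘L T) (((S ∘L T) ^ n) φ) := by
          rw [pow_succ', ContinuousLinearMap.mul_apply]
        have h1 : ∫ s in (0:ℝ)..t, ‖P s (((S ∘L T) ^ n) φ)‖ ^ 2
            ≤ ∫ s in (0:ℝ)..t, ((‖S‖ ^ 2 * c) ^ n / (n.factorial : ℝ) * ‖φ‖ ^ 2) * s ^ n := by
          apply intervalIntegral.integral_mono_on ht.1
          · exact (mono _).intervalIntegrable
          · exact ((continuous_const.mul (continuous_pow n)).intervalIntegrable 0 t)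
          · intro s hs
            have hs1 : s ∈ Set.Icc (0:ℝ) 1 := ⟨hs.1, hs.2.trans ht.2⟩
            have := IH s hs1
            calc ‖P s (((S ∘L T) ^ n) φ)‖ ^ 2
                ≤ (‖S‖ ^ 2 * c) ^ n * s ^ n / (n.factorial : ℝ) * ‖φ‖ ^ 2 := this
              _ = ((‖S‖ ^ 2 * c) ^ n / (n.factorial : ℝ) * ‖φ‖ ^ 2) * s ^ n := by ring
        rw [h0]
        have h2 := (step _ t ht).trans (mul_le_mul_of_nonneg_left h1 (by positivity))
        rw [intervalIntegral.integral_const_mul, integral_pow] at h2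
        have hfac : ((n + 1).factorial : ℝ) = ((n : ℝ) + 1) * (n.factorial : ℝ) := by
          push_cast [Nat.factorial_succ]; ring
        have hnfac : (0:ℝ) < (n.factorial : ℝ) := by positivity
        calc ‖P t ((S ∘L T) (((S ∘L T) ^ n) φ))‖ ^ 2
            ≤ ‖S‖ ^ 2 * c * ((‖S‖ ^ 2 * c) ^ n / (n.factorial : ℝ) * ‖φ‖ ^ 2 *
              ((t ^ (n + 1) - 0 ^ (n + 1)) / (n + 1))) := h2
          _ = (‖S‖ ^ 2 * c) ^ (n + 1) * t ^ (n + 1) / ((n + 1).factorial : ℝ) * ‖φ‖ ^ 2 := by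
              rw [hfac]
              exact volterra_aux_calc _ _ _ _ n (ne_of_gt hnfac)
  -- P 1 is (a.e.) the identity
  have hP1 : ∀ χ : Lp (EuclideanSpace ℝ (Fin 2)) 2 (volume.restrict (Set.Icc (0:ℝ) 1)),
      ‖P 1 χ‖ = ‖χ‖ := by
    intro χ
    have h : ((Set.Icc (0:ℝ) 1).indicator χ : ℝ → EuclideanSpace ℝ (Fin 2))
        =ᵐ[volume.restrict (Set.Icc (0:ℝ) 1)] χ := by
      filter_upwards [ae_restrict_mem measurableSet_Icc] with x hx
      exact Set.indicator_of_mem hx _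
    rw [Lp.norm_def, Lp.norm_def, eLpNorm_congr_ae ((hP 1 χ).trans h)]
  have := key n hn 1 ⟨zero_le_one, le_refl 1⟩
  rw [hP1] at this
  simpa only [one_pow, mul_one] using this
end

section
/- Let H = L²([0,1], ℝ²) and for t ∈ [0,1] let P_t : H → H be the orthogonal projection (P_t φ)(s) = 1_{[0,t]}(s) φ(s). Let S, T : H → H be bounded linear operators and c ≥ 0 a constant such that P_t S = P_t S P_t for every t ∈ [0,1], and ‖P_t (T φ)‖² ≤ c ∫₀ᵗ ‖P_s φ‖² ds for every φ ∈ H and t ∈ [0,1]. Then the operator S ∘ T is quasi-nilpotent: lim_{n→∞} ‖(S ∘ T)ⁿ‖^{1/n} = 0; equivalently, the spectral radius of S ∘ T is 0. -/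
open MeasureTheory Filter

local notation "μ01" => MeasureTheory.volume.restrict (Set.Icc (0:ℝ) 1)

set_option maxHeartbeats 1000000 in
set_option synthInstance.maxHeartbeats 100000 in
/-- Let `H = L²([0,1], ℝ²)`, let `P t` be the orthogonal projection given by multiplication
with `1_{[0,t]}`, and let `S, T` be bounded operators such that `P_t S = P_t S P_t` and
`‖P_t (T φ)‖² ≤ c ∫₀ᵗ ‖P_s φ‖² ds`.  Then `S ∘ T` is quasi-nilpotent:
`‖(S ∘ T)ⁿ‖^(1/n) → 0`, equivalently the spectral radius of `S ∘ T` is `0`. -/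
theorem volterra_composition_quasinilpotent
    (P : ℝ → (Lp (EuclideanSpace ℝ (Fin 2)) 2 (volume.restrict (Set.Icc (0:ℝ) 1)) →L[ℝ]
        Lp (EuclideanSpace ℝ (Fin 2)) 2 (volume.restrict (Set.Icc (0:ℝ) 1))))
    (hP : ∀ (t : ℝ) (φ : Lp (EuclideanSpace ℝ (Fin 2)) 2 (volume.restrict (Set.Icc (0:ℝ) 1))),
      (P t φ : ℝ → EuclideanSpace ℝ (Fin 2))
        =ᵐ[volume.restrict (Set.Icc (0:ℝ) 1)] (Set.Icc (0:ℝ) t).indicator φ)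
    (S T : Lp (EuclideanSpace ℝ (Fin 2)) 2 (volume.restrict (Set.Icc (0:ℝ) 1)) →L[ℝ]
        Lp (EuclideanSpace ℝ (Fin 2)) 2 (volume.restrict (Set.Icc (0:ℝ) 1)))
    (c : ℝ) (hc : 0 ≤ c)
    (ha : ∀ t ∈ Set.Icc (0:ℝ) 1, (P t) ∘L S = ((P t) ∘L S) ∘L (P t))
    (hb : ∀ (φ : Lp (EuclideanSpace ℝ (Fin 2)) 2 (volume.restrict (Set.Icc (0:ℝ) 1))),
      ∀ t ∈ Set.Icc (0:ℝ) 1, ‖P t (T φ)‖ ^ 2 ≤ c * ∫ s in (0:ℝ)..t, ‖P s φ‖ ^ 2) :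
    Tendsto (fun n : ℕ => ‖(S ∘L T) ^ n‖ ^ ((1 : ℝ) / n)) atTop (nhds 0) ∧
      spectralRadius ℝ (S ∘L T) = 0 := by
  set A := S ∘L T with hA
  set M := c * ‖S‖ ^ 2 with hM
  have hM0 : 0 ≤ M := by positivity
  -- norm comparison from a.e. pointwise comparison
  have key : ∀ (ψ χ : Lp (EuclideanSpace ℝ (Fin 2)) 2 μ01),
      (∀ᵐ x ∂μ01, ‖(ψ : ℝ → EuclideanSpace ℝ (Fin 2)) x‖
        ≤ ‖(χ : ℝ → EuclideanSpace ℝ (Fin 2)) x‖) → ‖ψ‖ ≤ ‖χ‖ := by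
    intro ψ χ h
    rw [Lp.norm_def, Lp.norm_def]
    exact ENNReal.toReal_mono (Lp.eLpNorm_ne_top χ) (eLpNorm_mono_ae h)
  -- each P t is a contraction
  have hcontr : ∀ (t : ℝ) (ψ : Lp (EuclideanSpace ℝ (Fin 2)) 2 μ01), ‖P t ψ‖ ≤ ‖ψ‖ := by
    intro t ψ
    refine key _ _ ?_
    filter_upwards [hP t ψ] with x hx
    rw [hx]
    exact norm_indicator_le_norm_self _ _
  -- monotonicity in t
  have hmono : ∀ (ψ : Lp (EuclideanSpace ℝ (Fin 2)) 2 μ01),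
      Monotone (fun s : ℝ => ‖P s ψ‖) := by
    intro ψ s t hst
    refine key _ _ ?_
    filter_upwards [hP s ψ, hP t ψ] with x hxs hxt
    rw [hxs, hxt]
    by_cases hx : x ∈ Set.Icc (0:ℝ) s
    · have hx' : x ∈ Set.Icc (0:ℝ) t :=
        Set.mem_Icc.mpr ⟨(Set.mem_Icc.mp hx).1, (Set.mem_Icc.mp hx).2.trans hst⟩
      rw [Set.indicator_of_mem hx, Set.indicator_of_mem hx']
    · rw [Set.indicator_of_notMem hx]
      simp [norm_nonneg]
  have hmonosq : ∀ (ψ : Lp (EuclideanSpace ℝ (Fin 2)) 2 μ01),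
      Monotone (fun s : ℝ => ‖P s ψ‖ ^ 2) := fun ψ s t hst =>
    pow_le_pow_left₀ (norm_nonneg _) (hmono ψ hst) 2
  -- P 1 preserves the norm (from below)
  have hfull : ∀ (ψ : Lp (EuclideanSpace ℝ (Fin 2)) 2 μ01), ‖ψ‖ ≤ ‖P 1 ψ‖ := by
    intro ψ
    refine key _ _ ?_
    filter_upwards [hP 1 ψ, ae_restrict_mem (μ := volume) (measurableSet_Icc (a := (0:ℝ)) (b := 1))]
      with x hx hmem
    rw [hx, Set.indicator_of_mem hmem]
  -- the key Volterra estimate for A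
  have step : ∀ (ψ : Lp (EuclideanSpace ℝ (Fin 2)) 2 μ01), ∀ t ∈ Set.Icc (0:ℝ) 1,
      ‖P t (A ψ)‖ ^ 2 ≤ M * ∫ s in (0:ℝ)..t, ‖P s ψ‖ ^ 2 := by
    intro ψ t ht
    have h2 := DFunLike.congr_fun (ha t ht) (T ψ)
    simp only [ContinuousLinearMap.comp_apply] at h2
    have e1 : P t (A ψ) = P t (S (P t (T ψ))) := by
      rw [hA]; exact h2
    have e2 : ‖P t (A ψ)‖ ≤ ‖S‖ * ‖P t (T ψ)‖ := by
      rw [e1]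
      exact (hcontr t _).trans (S.le_opNorm _)
    have e3 : ‖P t (A ψ)‖ ^ 2 ≤ ‖S‖ ^ 2 * ‖P t (T ψ)‖ ^ 2 := by
      rw [← mul_pow]
      exact pow_le_pow_left₀ (norm_nonneg _) e2 2
    have e4 := hb ψ t ht
    calc ‖P t (A ψ)‖ ^ 2 ≤ ‖S‖ ^ 2 * ‖P t (T ψ)‖ ^ 2 := e3
      _ ≤ ‖S‖ ^ 2 * (c * ∫ s in (0:ℝ)..t, ‖P s ψ‖ ^ 2) := by
          exact mul_le_mul_of_nonneg_left e4 (by positivity)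
      _ = M * ∫ s in (0:ℝ)..t, ‖P s ψ‖ ^ 2 := by rw [hM]; ring
  -- integrability
  have hint : ∀ (ψ : Lp (EuclideanSpace ℝ (Fin 2)) 2 μ01) (t : ℝ),
      IntervalIntegrable (fun s => ‖P s ψ‖ ^ 2) volume 0 t :=
    fun ψ t => (hmonosq ψ).intervalIntegrable
  -- main induction
  have main : ∀ (n : ℕ) (ψ : Lp (EuclideanSpace ℝ (Fin 2)) 2 μ01), ∀ t ∈ Set.Icc (0:ℝ) 1,
      ‖P t ((A ^ n) ψ)‖ ^ 2 ≤ M ^ n * t ^ n / (n.factorial : ℝ) * ‖ψ‖ ^ 2 := by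
    intro n
    induction n with
    | zero =>
        intro ψ t ht
        simp only [pow_zero, one_mul, Nat.factorial_zero, Nat.cast_one, div_one,
          ContinuousLinearMap.one_apply]
        exact pow_le_pow_left₀ (norm_nonneg _) (hcontr t ψ) 2
    | succ n ih =>
        intro ψ t ht
        have hApow : (A ^ (n + 1)) ψ = A ((A ^ n) ψ) := by
          rw [pow_succ']; rfl
        have hfacpos : (0:ℝ) < (n.factorial : ℝ) := by
          exact_mod_cast Nat.factorial_pos n
        calc ‖P t ((A ^ (n + 1)) ψ)‖ ^ 2
            ≤ M * ∫ s in (0:ℝ)..t, ‖P s ((A ^ n) ψ)‖ ^ 2 := by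
              rw [hApow]; exact step _ t ht
          _ ≤ M * ∫ s in (0:ℝ)..t, (M ^ n / (n.factorial : ℝ) * ‖ψ‖ ^ 2) * s ^ n := by
              refine mul_le_mul_of_nonneg_left ?_ hM0
              have hcont : Continuous fun s : ℝ => (M ^ n / (n.factorial : ℝ) * ‖ψ‖ ^ 2) * s ^ n :=
                continuous_const.mul (continuous_pow n)
              refine intervalIntegral.integral_mono_on ht.1 (hint _ t)
                (hcont.intervalIntegrable 0 t) ?_
              · intro s hs
                have hs1 : s ∈ Set.Icc (0:ℝ) 1 := ⟨hs.1, hs.2.trans ht.2⟩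
                have := ih ψ s hs1
                calc ‖P s ((A ^ n) ψ)‖ ^ 2
                    ≤ M ^ n * s ^ n / (n.factorial : ℝ) * ‖ψ‖ ^ 2 := this
                  _ = (M ^ n / (n.factorial : ℝ) * ‖ψ‖ ^ 2) * s ^ n := by ring
          _ = M ^ (n + 1) * t ^ (n + 1) / ((n + 1).factorial : ℝ) * ‖ψ‖ ^ 2 := by
              rw [intervalIntegral.integral_const_mul, integral_pow]
              have : ((n + 1).factorial : ℝ) = ((n : ℝ) + 1) * (n.factorial : ℝ) := by
                rw [Nat.factorial_succ]; push_cast; ring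
              rw [this, zero_pow (Nat.succ_ne_zero n)]
              field_simp
              ring
  -- operator norm bound
  have opbd : ∀ n : ℕ, ‖A ^ n‖ ≤ Real.sqrt (M ^ n / (n.factorial : ℝ)) := by
    intro n
    refine ContinuousLinearMap.opNorm_le_bound _ (Real.sqrt_nonneg _) fun ψ => ?_
    have h1 : ‖(A ^ n) ψ‖ ≤ ‖P 1 ((A ^ n) ψ)‖ := hfull _
    have h2 : ‖P 1 ((A ^ n) ψ)‖ ^ 2 ≤ M ^ n / (n.factorial : ℝ) * ‖ψ‖ ^ 2 := by
      have := main n ψ 1 (Set.mem_Icc.mpr ⟨zero_le_one, le_refl 1⟩)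
      rwa [one_pow, mul_one] at this
    have h3 : ‖(A ^ n) ψ‖ ^ 2 ≤ (Real.sqrt (M ^ n / (n.factorial : ℝ)) * ‖ψ‖) ^ 2 := by
      rw [mul_pow, Real.sq_sqrt (by positivity)]
      exact le_trans (pow_le_pow_left₀ (norm_nonneg _) h1 2) h2
    have := Real.sqrt_le_sqrt h3
    rwa [Real.sqrt_sq (norm_nonneg _), Real.sqrt_sq (by positivity)] at this
  -- the limit
  have htend : Tendsto (fun n : ℕ => ‖A ^ n‖ ^ ((1 : ℝ) / n)) atTop (nhds 0) := by
    rw [Metric.tendsto_atTop]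
    intro ε hε
    have hr : (0:ℝ) < ε / 2 := by linarith
    have hfac := FloorSemiring.tendsto_pow_div_factorial_atTop (K := ℝ) (M / (ε / 2) ^ 2)
    have hev : ∀ᶠ n : ℕ in atTop, (M / (ε / 2) ^ 2) ^ n / (n.factorial : ℝ) < 1 :=
      (tendsto_order.mp hfac).2 1 one_pos
    obtain ⟨N, hN⟩ := Filter.eventually_atTop.mp hev
    refine ⟨max N 1, fun n hn => ?_⟩
    have hn1 : 1 ≤ n := le_trans (le_max_right N 1) hn
    have hnN : N ≤ n := le_trans (le_max_left N 1) hn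
    have hlt := hN n hnN
    have hbound : M ^ n / (n.factorial : ℝ) ≤ ((ε / 2) ^ n) ^ 2 := by
      rw [div_pow, div_div, div_lt_one (by positivity)] at hlt
      have hfacpos : (0:ℝ) < (n.factorial : ℝ) := by exact_mod_cast Nat.factorial_pos n
      rw [div_le_iff₀ hfacpos, ← pow_mul, mul_comm n 2, pow_mul]
      exact hlt.le
    have h2 : ‖A ^ n‖ ≤ (ε / 2) ^ n := by
      refine (opbd n).trans ?_
      have := Real.sqrt_le_sqrt hbound
      rwa [Real.sqrt_sq (by positivity)] at this
    have h3 : ‖A ^ n‖ ^ ((1:ℝ)/n) ≤ ((ε / 2) ^ n) ^ ((1:ℝ)/n) :=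
      Real.rpow_le_rpow (norm_nonneg _) h2 (by positivity)
    have h4 : ((ε / 2) ^ n) ^ ((1:ℝ)/n) = ε / 2 := by
      rw [← Real.rpow_natCast (ε / 2) n, ← Real.rpow_mul hr.le, mul_one_div,
        div_self (by exact_mod_cast Nat.one_le_iff_ne_zero.mp hn1 : (n:ℝ) ≠ 0), Real.rpow_one]
    rw [Real.dist_eq, sub_zero, abs_of_nonneg (Real.rpow_nonneg (norm_nonneg _) _)]
    calc ‖A ^ n‖ ^ ((1:ℝ)/n) ≤ ε / 2 := h4 ▸ h3
      _ < ε := by linarith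
  refine ⟨htend, ?_⟩
  refine le_antisymm ?_ zero_le
  refine (spectrum.spectralRadius_le_liminf_pow_nnnorm_pow_one_div ℝ A).trans ?_
  have htend' : Tendsto (fun n : ℕ => (‖A ^ n‖₊ : ENNReal) ^ ((1 : ℝ) / n)) atTop (nhds 0) := by
    have h0 := ENNReal.tendsto_ofReal (m := fun n : ℕ => ‖A ^ n‖ ^ ((1 : ℝ) / n)) htend
    rw [ENNReal.ofReal_zero] at h0
    refine h0.congr fun n => ?_
    rw [← ENNReal.ofReal_rpow_of_nonneg (norm_nonneg _) (by positivity),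
      ofReal_norm, enorm_eq_nnnorm]
  rw [htend'.liminf_eq]
end
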